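/- For every natural number p, the series c_p = (-1)^p ∑_{k=p}^{∞} 1/(k+1+p) · 1/2^{2k} · ((2k-1)!!)² / ((k-p)!(k+p)!) converges absolutely. -/

import Mathlib

open Nat

lemma cb_sq (k : ℕ) : (k+1) * (Nat.centralBinom k)^2 ≤ 16^k := by
  induction k with
  | zero => simp [Nat.centralBinom]
  | succ k ih =>
    have h : (k + 1) * Nat.centralBinom (k+1) = 2 * (2 * k + 1) * Nat.centralBinom k :=
      Nat.succ_mul_centralBinom_succ k
    have hpos : 0 < (k+1)^3 := by positivity
    refine Nat.le_of_mul_le_mul_right ?_ hpos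
    have h2 : ((k+1) * Nat.centralBinom (k+1))^2 = (2*(2*k+1))^2 * (Nat.centralBinom k)^2 := by
      rw [h]; ring
    have h16 : (16:ℕ)^(k+1) = 16 * 16^k := by rw [pow_succ]; ring
    nlinarith [ih, Nat.centralBinom_pos k, sq_nonneg (Nat.centralBinom k)]

lemma df_eq (k : ℕ) : 2^k * k.factorial * (2*k-1)‼ = (2*k).factorial := by
  cases k with
  | zero => simp
  | succ k =>
    have h1 : 2*(k+1)-1 = 2*k+1 := by omega
    have h2 : 2*(k+1) = (2*k+1)+1 := by omega
    rw [h1, h2, Nat.factorial_eq_mul_doubleFactorial (2*k+1)]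
    have : (2*k+1+1)‼ = (2*(k+1))‼ := by rw [← h2]
    rw [this, Nat.doubleFactorial_two_mul]

lemma fac_sq (p n : ℕ) :
    ((p+n).factorial)^2 ≤ n.factorial * ((p+n)+p).factorial := by
  set k := p + n with hk
  have hp : p ≤ k := Nat.le_add_right p n
  have h1 : k.choose p * p.factorial * (k-p).factorial = k.factorial :=
    Nat.choose_mul_factorial_mul_factorial hp
  have h2 : (k+p).choose p * p.factorial * (k+p-p).factorial = (k+p).factorial :=
    Nat.choose_mul_factorial_mul_factorial (Nat.le_add_left p k)
  have hkp : k + p - p = k := by omega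
  have hkn : k - p = n := by omega
  rw [hkp] at h2
  rw [hkn] at h1
  have hc : k.choose p ≤ (k+p).choose p := Nat.choose_le_choose p (Nat.le_add_right k p)
  calc k.factorial^2 = (k.choose p * p.factorial * n.factorial) * k.factorial := by rw [h1]; ring
    _ ≤ ((k+p).choose p * p.factorial * n.factorial) * k.factorial := by
        have := Nat.mul_le_mul_right (p.factorial * n.factorial * k.factorial) hc
        nlinarith [hc]
    _ = ((k+p).choose p * p.factorial * k.factorial) * n.factorial := by ring
    _ = n.factorial * (k+p).factorial := by rw [h2]; ring

lemma main_nat (p n : ℕ) :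
    (n+1)^2 * ((2*(p+n)-1)‼)^2 ≤ ((p+n)+1+p) * 4^(p+n) * n.factorial * ((p+n)+p).factorial := by
  set k := p + n with hk
  have hC : 0 < (2^k * k.factorial)^2 := by positivity
  refine Nat.le_of_mul_le_mul_right ?_ hC
  have hdf : 2^k * k.factorial * (2*k-1)‼ = (2*k).factorial := df_eq k
  have hcb : Nat.centralBinom k * k.factorial * k.factorial = (2*k).factorial := by
    have := Nat.choose_mul_factorial_mul_factorial (show k ≤ 2*k by omega)
    simpa [Nat.centralBinom, show 2*k - k = k by omega] using this
  have key : (n+1)^2 * (Nat.centralBinom k)^2 ≤ (k+1+p) * 16^k := by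
    have h1 : (n+1)^2 ≤ (k+1)*(k+1+p) := by
      rw [pow_two]; exact Nat.mul_le_mul (by omega) (by omega)
    calc (n+1)^2 * (Nat.centralBinom k)^2 ≤ (k+1)*(k+1+p) * (Nat.centralBinom k)^2 :=
          Nat.mul_le_mul_right _ h1
      _ = (k+1+p) * ((k+1) * (Nat.centralBinom k)^2) := by ring
      _ ≤ (k+1+p) * 16^k := Nat.mul_le_mul_left _ (cb_sq k)
  have hfs := fac_sq p n
  calc (n+1)^2 * ((2*k-1)‼)^2 * (2^k * k.factorial)^2
      = (n+1)^2 * (2^k * k.factorial * (2*k-1)‼)^2 := by ring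
    _ = (n+1)^2 * ((Nat.centralBinom k) * k.factorial * k.factorial)^2 := by rw [hdf, hcb]
    _ = ((n+1)^2 * (Nat.centralBinom k)^2) * (k.factorial^2 * k.factorial^2) := by ring
    _ ≤ ((k+1+p) * 16^k) * (k.factorial^2 * k.factorial^2) := Nat.mul_le_mul_right _ key
    _ ≤ ((k+1+p) * 16^k) * (k.factorial^2 * (n.factorial * (k+p).factorial)) := by
        exact Nat.mul_le_mul_left _ (Nat.mul_le_mul_left _ hfs)
    _ = (k+1+p) * 4^k * n.factorial * (k+p).factorial * (2^k * k.factorial)^2 := by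
        have e : (2^k * k.factorial)^2 = 4^k * k.factorial^2 := by
          rw [mul_pow, ← pow_mul, mul_comm k 2, pow_mul]; norm_num
        have e2 : (4:ℕ)^k * 4^k = 16^k := by rw [← mul_pow]; norm_num
        rw [e, ← e2]; ring

/-- The series `c_p = (-1)^p ∑_{k=p}^∞ 1/(k+1+p) · 1/2^{2k} · ((2k-1)!!)²/((k-p)!(k+p)!)`
converges absolutely (here the sum over `k ≥ p` is reindexed by `k = p + n`). -/
theorem cp_series_abs_convergent (p : ℕ) :
    Summable (fun n : ℕ =>
      |((-1 : ℝ))^p * ((1 : ℝ) / ((p + n : ℕ) + 1 + p) * (1 / (2 : ℝ)^(2*(p + n))) *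
        ((Nat.doubleFactorial (2*(p + n) - 1) : ℝ))^2 /
        ((Nat.factorial ((p + n) - p) : ℝ) * (Nat.factorial ((p + n) + p) : ℝ)))|) := by
  have hsum : Summable (fun n : ℕ => 1 / ((n:ℝ)+1)^2) := by
    have h : Summable (fun n : ℕ => 1 / ((n:ℝ))^2) := Real.summable_one_div_nat_pow.mpr one_lt_two
    have := (summable_nat_add_iff (f := fun n : ℕ => 1 / ((n:ℝ))^2) 1).mpr h
    exact this.congr (by intro n; push_cast; ring_nf)
  refine Summable.of_nonneg_of_le (fun n => abs_nonneg _) (fun n => ?_) hsum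
  have hk : (p + n) - p = n := by omega
  rw [hk, abs_mul, abs_pow, abs_neg, abs_one, one_pow, one_mul,
    abs_of_nonneg (by positivity)]
  have hden1 : (0:ℝ) < ((p + n : ℕ) : ℝ) + 1 + p := by positivity
  have hX : (1 : ℝ) / (((p + n : ℕ):ℝ) + 1 + p) * (1 / (2 : ℝ)^(2*(p + n))) *
        ((Nat.doubleFactorial (2*(p + n) - 1) : ℝ))^2 /
        ((Nat.factorial n : ℝ) * (Nat.factorial ((p + n) + p) : ℝ))
      = ((Nat.doubleFactorial (2*(p + n) - 1) : ℝ))^2 /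
        (((((p + n) + 1 + p : ℕ)) : ℝ) * (4:ℝ)^(p+n) *
          (Nat.factorial n : ℝ) * (Nat.factorial ((p + n) + p) : ℝ)) := by
    have h4 : (2 : ℝ)^(2*(p + n)) = (4:ℝ)^(p+n) := by
      rw [pow_mul]; norm_num
    rw [h4]
    rw [div_eq_div_iff (by positivity) (by positivity)]
    push_cast
    field_simp
  rw [hX]
  rw [div_le_div_iff₀ (by positivity) (by positivity)]
  have h := main_nat p n
  have h' : ((n+1)^2 * ((2*(p+n)-1)‼)^2 : ℝ) ≤
      ((((p+n)+1+p) * 4^(p+n) * n.factorial * ((p+n)+p).factorial : ℕ) : ℝ) := by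
    exact_mod_cast h
  push_cast at h' ⊢
  nlinarith [h']
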